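/- Fix r_I, R_p > 0 and r_D ≥ 0. With J(r_D) = ∫₀^{r_D} 2 t · S_I(t, r_I, R_p)/(π R_p²) dt, the function μ ↦ exp(−μ π r_D²) · (1 − exp(−μ π (r_I² − J(r_D))))/(1 − exp(−μ π r_I²)) is nonincreasing on (0, ∞); i.e., the closed-form collision probability P_C decreases as the primary traffic intensity μ = pλ increases. -/

import Mathlib

open MeasureTheory Metric Real

/-- `SI d r₁ r₂` is the area (two-dimensional Lebesgue measure) of the intersection of
two closed disks in the plane of radii `r₁` and `r₂` whose centers are at distance `d`. -/
noncomputable def SI (d r₁ r₂ : ℝ) : ℝ :=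
  (volume (closedBall (0 : EuclideanSpace ℝ (Fin 2)) r₁ ∩
    closedBall (EuclideanSpace.single (0 : Fin 2) d) r₂)).toReal

/-- `J(r_D) = ∫₀^{r_D} 2 t · S_I(t, r_I, R_p)/(π R_p²) dt`. -/
noncomputable def Jfun (r_I R_p r_D : ℝ) : ℝ :=
  ∫ t in (0:ℝ)..r_D, 2 * t * SI t r_I R_p / (π * R_p ^ 2)

open ENNReal

local notation "E2" => EuclideanSpace ℝ (Fin 2)

lemma vol_cb (c : E2) (r : ℝ) (hr : 0 ≤ r) :
    volume (closedBall c r) = ENNReal.ofReal (π * r ^ 2) := by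
  rw [EuclideanSpace.volume_closedBall]
  have h1 : Real.sqrt π ^ Fintype.card (Fin 2) = π := by
    simp [Real.sq_sqrt Real.pi_nonneg]
  have h2 : Real.Gamma ((Fintype.card (Fin 2) : ℝ) / 2 + 1) = 1 := by
    norm_num [Real.Gamma_two]
  rw [h1, h2]
  rw [← ENNReal.ofReal_pow hr, ← ENNReal.ofReal_mul (by positivity)]
  norm_num [mul_comm]

lemma meas_vol (r₁ r₂ : ℝ) :
    Measurable fun x : E2 => volume (closedBall 0 r₁ ∩ closedBall x r₂) := by
  have hs : MeasurableSet {p : E2 × E2 | p.2 ∈ closedBall 0 r₁ ∧ dist p.2 p.1 ≤ r₂} := by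
    apply MeasurableSet.inter
    · exact measurable_snd measurableSet_closedBall
    · exact (isClosed_le (continuous_dist.comp (continuous_snd.prodMk continuous_fst))
        continuous_const).measurableSet
  have h := measurable_measure_prodMk_left (ν := (volume : Measure E2)) hs
  convert h using 2 with x
  rfl

lemma vol_rot (r₁ r₂ : ℝ) (x : E2) :
    volume (closedBall 0 r₁ ∩ closedBall x r₂) =
      volume (closedBall 0 r₁ ∩ closedBall (EuclideanSpace.single (0 : Fin 2) ‖x‖) r₂) := by
  set y : E2 := EuclideanSpace.single (0 : Fin 2) ‖x‖ with hy
  have hnorm : ‖x‖ = ‖y‖ := by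
    rw [hy, EuclideanSpace.norm_single, Real.norm_eq_abs, abs_of_nonneg (norm_nonneg x)]
  set e : E2 ≃ₗᵢ[ℝ] E2 := Submodule.reflection (ℝ ∙ (x - y))ᗮ with he
  have hex : e x = y := Submodule.reflection_sub hnorm
  have pre : ∀ (c : E2) (r : ℝ), e ⁻¹' closedBall c r = closedBall (e.symm c) r := by
    intro c r
    ext z
    simp only [Set.mem_preimage, mem_closedBall]
    rw [← e.apply_symm_apply c, e.dist_map, e.apply_symm_apply]
  have := (e.measurePreserving).measure_preimage
    (s := closedBall 0 r₁ ∩ closedBall y r₂)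
    ((measurableSet_closedBall.inter measurableSet_closedBall).nullMeasurableSet)
  rw [Set.preimage_inter, pre, pre] at this
  have h0 : e.symm 0 = 0 := map_zero _
  have hxy : e.symm y = x := by rw [← hex, e.symm_apply_apply]
  rw [h0, hxy] at this
  exact this

lemma lint_vol (r₁ r₂ : ℝ) :
    ∫⁻ x : E2, volume (closedBall 0 r₁ ∩ closedBall x r₂) =
      volume (closedBall (0 : E2) r₁) * volume (closedBall (0 : E2) r₂) := by
  set f : E2 → ℝ≥0∞ := (closedBall (0 : E2) r₁).indicator 1 with hf
  set g : E2 → ℝ≥0∞ := (closedBall (0 : E2) r₂).indicator 1 with hg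
  have hfm : Measurable f := measurable_one.indicator measurableSet_closedBall
  have hgm : Measurable g := measurable_one.indicator measurableSet_closedBall
  have key : ∀ x : E2, volume (closedBall 0 r₁ ∩ closedBall x r₂)
      = ∫⁻ y, f y * g (y - x) := by
    intro x
    rw [← lintegral_indicator_one (measurableSet_closedBall.inter measurableSet_closedBall)]
    congr 1
    funext y
    have hmem : y ∈ closedBall x r₂ ↔ y - x ∈ closedBall (0 : E2) r₂ := by
      simp [mem_closedBall, dist_eq_norm]
    by_cases h1 : y ∈ closedBall (0 : E2) r₁ <;>
      by_cases h2 : y ∈ closedBall x r₂ <;>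
      
      simp_all [f, g, Set.indicator_apply, mem_closedBall, dist_eq_norm, le_of_lt, not_le.mpr]
    all_goals simp_all [f, g, Set.indicator_apply, mem_closedBall, dist_eq_norm]
  simp_rw [key]
  have hswap : ∫⁻ x : E2, ∫⁻ y, f y * g (y - x) = ∫⁻ y : E2, ∫⁻ x, f y * g (y - x) := by
    apply lintegral_lintegral_swap
    exact ((hfm.comp measurable_snd).mul (hgm.comp (measurable_snd.sub measurable_fst))).aemeasurable
  rw [hswap]
  have inner : ∀ y : E2, ∫⁻ x, f y * g (y - x) = f y * volume (closedBall (0 : E2) r₂) := by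
    intro y
    rw [lintegral_const_mul (f y) (show Measurable fun x : E2 => g (y - x) from
      hgm.comp (measurable_const.sub measurable_id))]
    congr 1
    rw [(Measure.measurePreserving_sub_left (volume : Measure E2) y).lintegral_comp hgm]
    exact lintegral_indicator_one measurableSet_closedBall
  simp_rw [inner]
  rw [lintegral_mul_const _ hfm, lintegral_indicator_one measurableSet_closedBall]

lemma SI_nonneg (d r₁ r₂ : ℝ) : 0 ≤ SI d r₁ r₂ := ENNReal.toReal_nonneg

lemma SI_le (d r₁ r₂ : ℝ) (h₂ : 0 ≤ r₂) : SI d r₁ r₂ ≤ π * r₂ ^ 2 := by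
  have h : volume (closedBall (0 : E2) r₁ ∩
      closedBall (EuclideanSpace.single (0 : Fin 2) d) r₂) ≤
      volume (closedBall (EuclideanSpace.single (0 : Fin 2) d) r₂) :=
    measure_mono Set.inter_subset_right
  rw [vol_cb _ _ h₂] at h
  calc SI d r₁ r₂ ≤ (ENNReal.ofReal (π * r₂ ^ 2)).toReal :=
        ENNReal.toReal_mono ofReal_ne_top h
    _ = π * r₂ ^ 2 := ENNReal.toReal_ofReal (by positivity)

lemma SI_zero (d r₁ r₂ : ℝ) (h₁ : 0 ≤ r₁) (hd : r₁ + r₂ < d) : SI d r₁ r₂ = 0 := by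
  have : closedBall (0 : E2) r₁ ∩ closedBall (EuclideanSpace.single (0 : Fin 2) d) r₂ = ∅ := by
    rw [Set.eq_empty_iff_forall_notMem]
    intro z ⟨hz1, hz2⟩
    rw [mem_closedBall] at hz1 hz2
    have hdd : dist (0 : E2) (EuclideanSpace.single (0 : Fin 2) d) ≤ r₁ + r₂ :=
      (dist_triangle _ z _).trans (by
        rw [dist_comm (0:E2) z]; exact add_le_add hz1 hz2)
    rw [dist_comm, dist_zero_right, EuclideanSpace.norm_single] at hdd
    have : d ≤ r₁ + r₂ := (le_abs_self d).trans hdd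
    linarith
  unfold SI
  rw [this]
  simp

lemma SI_meas (r₁ r₂ : ℝ) : Measurable fun t : ℝ => SI t r₁ r₂ := by
  have hiso : Isometry (fun t : ℝ => EuclideanSpace.single (0 : Fin 2) t) :=
    Isometry.of_dist_eq fun a b => EuclideanSpace.dist_single_same 0 a b
  exact ((meas_vol r₁ r₂).comp hiso.continuous.measurable).ennreal_toReal

lemma integral_SI (r₁ r₂ : ℝ) (h₁ : 0 ≤ r₁) (h₂ : 0 ≤ r₂) :
    ∫ y in Set.Ioi (0:ℝ), y * SI y r₁ r₂ = π * r₁ ^ 2 * r₂ ^ 2 / 2 := by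
  have hpolar := integral_fun_norm_addHaar (volume : Measure E2) (fun y => SI y r₁ r₂)
  have hdim : Module.finrank ℝ E2 = 2 := by
    simp [finrank_euclideanSpace]
  have hball : ((volume : Measure E2) (ball 0 1)).toReal = π := by
    rw [EuclideanSpace.volume_ball]
    have h1 : Real.sqrt π ^ Fintype.card (Fin 2) = π := by
      simp [Real.sq_sqrt Real.pi_nonneg]
    have h2 : Real.Gamma ((Fintype.card (Fin 2) : ℝ) / 2 + 1) = 1 := by
      norm_num [Real.Gamma_two]
    rw [h1, h2]
    simp [Real.pi_nonneg]
  have hLHS : ∫ x : E2, SI ‖x‖ r₁ r₂ = π * r₁ ^ 2 * (π * r₂ ^ 2) := by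
    have heq : ∀ x : E2, SI ‖x‖ r₁ r₂ =
        (volume (closedBall 0 r₁ ∩ closedBall x r₂)).toReal := by
      intro x; unfold SI; rw [vol_rot r₁ r₂ x]
    simp_rw [heq]
    have hfin : ∀ᵐ x : E2, volume (closedBall 0 r₁ ∩ closedBall x r₂) < ⊤ := by
      refine Filter.Eventually.of_forall fun x => ?_
      exact lt_of_le_of_lt (measure_mono Set.inter_subset_left)
        (by rw [vol_cb _ _ h₁]; exact ofReal_lt_top)
    rw [integral_toReal (meas_vol r₁ r₂).aemeasurable hfin, lint_vol,
      vol_cb _ _ h₁, vol_cb _ _ h₂, ← ENNReal.ofReal_mul (by positivity)]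
    rw [ENNReal.toReal_ofReal (by positivity)]
  rw [hLHS, hdim, measureReal_def, hball] at hpolar
  have : ∫ y in Set.Ioi (0:ℝ), y ^ (2-1) • SI y r₁ r₂ = ∫ y in Set.Ioi (0:ℝ), y * SI y r₁ r₂ := by
    norm_num [smul_eq_mul]
  rw [this] at hpolar
  simp only [nsmul_eq_mul, smul_eq_mul, Nat.cast_ofNat] at hpolar
  have hπ : (0:ℝ) < π := Real.pi_pos
  field_simp
  nlinarith [hpolar, hπ]

variable {r_I R_p r_D : ℝ}

lemma integrable_tSI (hrI : 0 < r_I) (hRp : 0 < R_p) :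
    IntegrableOn (fun y : ℝ => y * SI y r_I R_p) (Set.Ioi 0) volume := by
  set M : ℝ := (r_I + R_p) * (π * R_p ^ 2) with hM
  have hMnn : 0 ≤ M := by positivity
  have hgint : IntegrableOn (fun _ : ℝ => M) (Set.Ioc 0 (r_I + R_p)) volume :=
    (integrableOn_const_iff (by simp)).mpr (Or.inr measure_Ioc_lt_top)
  have hind : Integrable ((Set.Ioc (0:ℝ) (r_I + R_p)).indicator fun _ => M) volume :=
    hgint.integrable_indicator measurableSet_Ioc
  refine Integrable.mono' hind.restrict ?_ ?_
  · exact (measurable_id.mul (SI_meas r_I R_p)).aestronglyMeasurable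
  · refine (ae_restrict_iff' measurableSet_Ioi).2 (Filter.Eventually.of_forall fun y hy => ?_)
    by_cases hle : y ≤ r_I + R_p
    · have : y ∈ Set.Ioc (0:ℝ) (r_I + R_p) := ⟨hy, hle⟩
      rw [Set.indicator_of_mem this]
      rw [Real.norm_eq_abs, abs_of_nonneg (mul_nonneg (le_of_lt hy) (SI_nonneg _ _ _))]
      exact mul_le_mul hle (SI_le _ _ _ hRp.le) (SI_nonneg _ _ _) (by positivity)
    · have h0 : SI y r_I R_p = 0 := SI_zero _ _ _ hrI.le (not_le.mp hle)
      rw [Set.indicator_of_notMem (fun hc => hle hc.2)]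
      simp [h0]

lemma Jfun_nonneg (hrD : 0 ≤ r_D) : 0 ≤ Jfun r_I R_p r_D := by
  apply intervalIntegral.integral_nonneg hrD
  intro t ht
  have h1 := SI_nonneg t r_I R_p
  have h2 : (0:ℝ) ≤ t := ht.1
  apply div_nonneg (by positivity) (by positivity)

lemma intInt (hRp : 0 < R_p) (hrI : 0 < r_I) (hrD : 0 ≤ r_D) :
    IntervalIntegrable (fun t => 2 * t * SI t r_I R_p / (π * R_p ^ 2)) volume 0 r_D := by
  rw [intervalIntegrable_iff_integrableOn_Ioc_of_le hrD]
  have h : IntegrableOn (fun y : ℝ => y * SI y r_I R_p) (Set.Ioc 0 r_D) volume :=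
    (integrable_tSI hrI hRp).mono_set Set.Ioc_subset_Ioi_self
  have : (fun t : ℝ => 2 * t * SI t r_I R_p / (π * R_p ^ 2)) =
      fun t : ℝ => (2 / (π * R_p ^ 2)) * (t * SI t r_I R_p) := by
    funext t; ring
  rw [this]
  exact h.const_mul _

lemma Jfun_le_rD (hRp : 0 < R_p) (hrI : 0 < r_I) (hrD : 0 ≤ r_D) :
    Jfun r_I R_p r_D ≤ r_D ^ 2 := by
  have hbound : ∀ t ∈ Set.Icc (0:ℝ) r_D,
      2 * t * SI t r_I R_p / (π * R_p ^ 2) ≤ 2 * t := by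
    intro t ht
    rw [div_le_iff₀ (by positivity)]
    have h1 : SI t r_I R_p ≤ π * R_p ^ 2 := SI_le _ _ _ hRp.le
    nlinarith [ht.1, SI_nonneg t r_I R_p]
  have hg : IntervalIntegrable (fun t : ℝ => 2 * t) volume 0 r_D :=
    (continuous_const.mul continuous_id).intervalIntegrable 0 r_D
  have hmono := intervalIntegral.integral_mono_on hrD (intInt hRp hrI hrD) hg hbound
  have hval : (∫ t in (0:ℝ)..r_D, 2 * t) = r_D ^ 2 := by
    have : (fun t : ℝ => 2 * t) = fun t : ℝ => (2:ℝ) * t := rfl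
    rw [intervalIntegral.integral_const_mul, integral_id]
    ring
  unfold Jfun
  calc (∫ t in (0:ℝ)..r_D, 2 * t * SI t r_I R_p / (π * R_p ^ 2)) ≤ ∫ t in (0:ℝ)..r_D, 2 * t := hmono
    _ = r_D ^ 2 := hval

lemma Jfun_le_rI (hRp : 0 < R_p) (hrI : 0 < r_I) (hrD : 0 ≤ r_D) :
    Jfun r_I R_p r_D ≤ r_I ^ 2 := by
  have hrw : Jfun r_I R_p r_D =
      ∫ t in Set.Ioc (0:ℝ) r_D, (2 / (π * R_p ^ 2)) * (t * SI t r_I R_p) := by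
    unfold Jfun
    rw [intervalIntegral.integral_of_le hrD]
    congr 1; funext t; ring
  rw [hrw]
  have hmono : ∫ t in Set.Ioc (0:ℝ) r_D, (2 / (π * R_p ^ 2)) * (t * SI t r_I R_p) ≤
      ∫ t in Set.Ioi (0:ℝ), (2 / (π * R_p ^ 2)) * (t * SI t r_I R_p) := by
    apply setIntegral_mono_set ((integrable_tSI hrI hRp).const_mul _)
    · refine (ae_restrict_iff' measurableSet_Ioi).2 (Filter.Eventually.of_forall fun y hy => ?_)
      have := SI_nonneg y r_I R_p
      have hy' : (0:ℝ) ≤ y := le_of_lt hy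
      have hc : (0:ℝ) ≤ 2 / (π * R_p ^ 2) := by positivity
      positivity
    · exact HasSubset.Subset.eventuallyLE Set.Ioc_subset_Ioi_self
  have hval : ∫ t in Set.Ioi (0:ℝ), (2 / (π * R_p ^ 2)) * (t * SI t r_I R_p) = r_I ^ 2 := by
    rw [MeasureTheory.integral_const_mul, integral_SI r_I R_p hrI.le hRp.le]
    field_simp
  linarith [hmono, hval.le, hval.ge]

lemma concave_key {s t μ : ℝ} (hs : 0 ≤ s) (hst : s ≤ t) (hμ : 0 ≤ μ) :
    s * (1 - Real.exp (-μ * t)) ≤ t * (1 - Real.exp (-μ * s)) := by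
  rcases eq_or_lt_of_le (hs.trans hst) with ht | ht
  · have hs0 : s = 0 := le_antisymm (hst.trans ht.symm.le) hs
    simp [hs0, ← ht]
  have h := convexOn_exp.2 (Set.mem_univ (-μ * t))
    (Set.mem_univ (0:ℝ)) (div_nonneg hs ht.le)
    (show (0:ℝ) ≤ 1 - s / t by
      have : s / t ≤ 1 := (div_le_one ht).2 hst
      linarith)
    (show s / t + (1 - s / t) = 1 by ring)
  simp only [smul_eq_mul, mul_zero, add_zero, Real.exp_zero, mul_one] at h
  have harg : s / t * (-μ * t) = -μ * s := by field_simp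
  rw [harg] at h
  have h2 : t * (s / t * Real.exp (-μ * t) + (1 - s / t)) =
      s * Real.exp (-μ * t) + t - s := by
    field_simp
    ring
  have h3 := mul_le_mul_of_nonneg_left h ht.le
  rw [h2] at h3
  nlinarith [h3]
lemma convex_key {s t μ : ℝ} (hs : 0 ≤ s) (hst : s ≤ t) (hμ : 0 ≤ μ) :
    t * (Real.exp (μ * s) - 1) ≤ s * (Real.exp (μ * t) - 1) := by
  rcases eq_or_lt_of_le (hs.trans hst) with ht | ht
  · have hs0 : s = 0 := le_antisymm (hst.trans ht.symm.le) hs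
    simp [hs0, ← ht]
  have h := convexOn_exp.2 (Set.mem_univ (μ * t))
    (Set.mem_univ (0:ℝ)) (div_nonneg hs ht.le)
    (show (0:ℝ) ≤ 1 - s / t by
      have : s / t ≤ 1 := (div_le_one ht).2 hst
      linarith)
    (show s / t + (1 - s / t) = 1 by ring)
  simp only [smul_eq_mul, mul_zero, add_zero, Real.exp_zero, mul_one] at h
  have harg : s / t * (μ * t) = μ * s := by field_simp
  rw [harg] at h
  have h2 : t * (s / t * Real.exp (μ * t) + (1 - s / t)) =
      s * Real.exp (μ * t) + t - s := by
    field_simp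
    ring
  have h3 := mul_le_mul_of_nonneg_left h ht.le
  rw [h2] at h3
  nlinarith [h3]

lemma anti_aux {A B C : ℝ} (hA : 0 ≤ A) (hB : 0 ≤ B) (hBC : B ≤ C) (hC : 0 < C)
    (hACB : C ≤ A + B) :
    AntitoneOn (fun μ : ℝ =>
      Real.exp (-μ * A) * (1 - Real.exp (-μ * B)) / (1 - Real.exp (-μ * C)))
      (Set.Ioi (0:ℝ)) := by
  have hden : ∀ μ : ℝ, μ ∈ Set.Ioi (0:ℝ) → 1 - Real.exp (-μ * C) ≠ 0 := by
    intro μ hμ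
    have : Real.exp (-μ * C) < 1 := by
      rw [Real.exp_lt_one_iff]
      have := Set.mem_Ioi.mp hμ
      nlinarith
    linarith
  have hderiv : ∀ μ : ℝ, μ ∈ Set.Ioi (0:ℝ) →
      HasDerivAt (fun μ : ℝ =>
        Real.exp (-μ * A) * (1 - Real.exp (-μ * B)) / (1 - Real.exp (-μ * C)))
        (((Real.exp (-μ * A) * -A * (1 - Real.exp (-μ * B)) +
            Real.exp (-μ * A) * (Real.exp (-μ * B) * B)) * (1 - Real.exp (-μ * C)) -
          Real.exp (-μ * A) * (1 - Real.exp (-μ * B)) * (Real.exp (-μ * C) * C)) /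
          (1 - Real.exp (-μ * C)) ^ 2) μ := by
    intro μ hμ
    have hlin : ∀ k : ℝ, HasDerivAt (fun x : ℝ => -x * k) (-k) μ := by
      intro k
      simpa using ((hasDerivAt_id μ).neg.mul_const k)
    have hEA : HasDerivAt (fun x : ℝ => Real.exp (-x * A)) (Real.exp (-μ * A) * -A) μ :=
      (hlin A).exp
    have hEB : HasDerivAt (fun x : ℝ => Real.exp (-x * B)) (Real.exp (-μ * B) * -B) μ :=
      (hlin B).exp
    have hEC : HasDerivAt (fun x : ℝ => Real.exp (-x * C)) (Real.exp (-μ * C) * -C) μ :=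
      (hlin C).exp
    have hN : HasDerivAt (fun x : ℝ => Real.exp (-x * A) * (1 - Real.exp (-x * B)))
        (Real.exp (-μ * A) * -A * (1 - Real.exp (-μ * B)) +
          Real.exp (-μ * A) * (Real.exp (-μ * B) * B)) μ := by
      have : HasDerivAt (fun x : ℝ => Real.exp (-x * A) * (1 - Real.exp (-x * B))) _ μ :=
        hEA.mul ((hasDerivAt_const μ (1:ℝ)).sub hEB :
        HasDerivAt (fun x : ℝ => 1 - Real.exp (-x * B)) _ μ)
      convert this using 1
      ring
    have hD : HasDerivAt (fun x : ℝ => 1 - Real.exp (-x * C)) (Real.exp (-μ * C) * C) μ := by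
      have : HasDerivAt (fun x : ℝ => 1 - Real.exp (-x * C)) _ μ :=
        (hasDerivAt_const μ (1:ℝ)).sub hEC
      convert this using 1
      ring
    exact hN.div hD (hden μ hμ)
  apply antitoneOn_of_deriv_nonpos (convex_Ioi 0)
  · apply ContinuousOn.div
    · exact (Continuous.mul (by continuity) (by continuity)).continuousOn
    · exact (by continuity : Continuous fun μ : ℝ => 1 - Real.exp (-μ * C)).continuousOn
    · exact hden
  · intro μ hμ
    rw [interior_Ioi] at hμ
    exact (hderiv μ hμ).differentiableAt.differentiableWithinAt
  · intro μ hμ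
    rw [interior_Ioi] at hμ
    rw [(hderiv μ hμ).deriv]
    have hμ0 : (0:ℝ) < μ := hμ
    set X := Real.exp (-μ * B) with hX
    set Y := Real.exp (-μ * C) with hY
    set EA := Real.exp (-μ * A) with hEAdef
    apply div_nonpos_of_nonpos_of_nonneg _ (sq_nonneg _)
    -- key inequality
    have hXpos : 0 < X := Real.exp_pos _
    have hYpos : 0 < Y := Real.exp_pos _
    have hEApos : 0 < EA := Real.exp_pos _
    have hX1 : X ≤ 1 := by
      rw [hX, Real.exp_le_one_iff]
      nlinarith
    have hY1 : Y < 1 := by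
      rw [hY, Real.exp_lt_one_iff]
      nlinarith
    set d := C - B with hd
    have hd0 : 0 ≤ d := by linarith
    have ineq1 : B * (1 - Y) ≤ C * (1 - X) := concave_key hB hBC hμ0.le
    have e1 : Real.exp (μ * d) * Y = X := by
      rw [hY, hX, ← Real.exp_add]
      congr 1
      rw [hd]; ring
    have e3 : Real.exp (μ * C) * Y = 1 := by
      rw [hY, ← Real.exp_add, show μ * C + -μ * C = 0 by ring, Real.exp_zero]
    have h'' : C * (X - Y) ≤ d * (1 - Y) := by
      have hconv := convex_key hd0 (show d ≤ C by linarith) hμ0.le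
      have h' := mul_le_mul_of_nonneg_right hconv hYpos.le
      have e1' : C * (Real.exp (μ * d) * Y) = C * X := by rw [e1]
      have e3' : d * (Real.exp (μ * C) * Y) = d * 1 := by rw [e3]
      nlinarith [h', e1', e3']
    clear_value X Y EA d
    have hdA : d ≤ A := by linarith
    have hx1' : 0 ≤ 1 - X := by linarith
    have hy1' : 0 ≤ 1 - Y := by linarith
    have c1 : X * B * (1 - Y) ≤ X * C * (1 - X) := by
      nlinarith [mul_le_mul_of_nonneg_left ineq1 hXpos.le]
    have c3 : C * (1 - X) * (X - Y) ≤ A * (1 - X) * (1 - Y) := by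
      nlinarith [mul_le_mul_of_nonneg_left h'' hx1',
        mul_le_mul_of_nonneg_right hdA (mul_nonneg hx1' hy1')]
    have core : X * B * (1 - Y) - C * Y * (1 - X) ≤ A * (1 - X) * (1 - Y) := by
      linarith [c1, c3]
    linarith [mul_le_mul_of_nonneg_left core hEApos.le]

/-- The closed-form collision probability `P_C` (Proposition 3, eq. (14)) is
nonincreasing in the traffic intensity `μ = pλ` on `(0, ∞)`. -/
theorem pC_anti_in_traffic (r_I R_p r_D : ℝ)
    (hrI : 0 < r_I) (hRp : 0 < R_p) (hrD : 0 ≤ r_D) :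
    AntitoneOn (fun μ : ℝ =>
      Real.exp (-μ * (π * r_D ^ 2)) *
        (1 - Real.exp (-μ * (π * (r_I ^ 2 - Jfun r_I R_p r_D)))) /
        (1 - Real.exp (-μ * (π * r_I ^ 2))))
      (Set.Ioi (0:ℝ)) := by
  have hJ0 : 0 ≤ Jfun r_I R_p r_D := Jfun_nonneg hrD
  have hJD : Jfun r_I R_p r_D ≤ r_D ^ 2 := Jfun_le_rD hRp hrI hrD
  have hJI : Jfun r_I R_p r_D ≤ r_I ^ 2 := Jfun_le_rI hRp hrI hrD
  have h1 : π * Jfun r_I R_p r_D ≤ π * r_D ^ 2 :=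
    mul_le_mul_of_nonneg_left hJD Real.pi_nonneg
  refine anti_aux ?_ ?_ ?_ ?_ ?_
  · positivity
  · exact mul_nonneg Real.pi_nonneg (sub_nonneg.2 hJI)
  · exact mul_le_mul_of_nonneg_left (by linarith) Real.pi_nonneg
  · positivity
  · nlinarith [h1]
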